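/- Write π_i(T) = ∑_{j≥0} b_{ij}·T^j with b_{ij} ∈ ℤ_p. Then for every fixed j ∈ ℤ_{≥0}, the coefficients b_{ij} tend to 0 in the p-adic topology of ℤ_p as i → ∞. -/

import Mathlib

open PowerSeries

noncomputable section

open scoped Classical in
/-- The series ℓ(T) = ∑_{i≥0} T^{p^i}/p^i over ℚ. -/
def lseries (p : ℕ) : PowerSeries ℚ :=
  PowerSeries.mk fun n => if ∃ i : ℕ, n = p ^ i then (n : ℚ)⁻¹ else 0

/-- Substitution `f(g)` of a power series `g` with zero constant coefficient
into a power series `f`. -/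
def psComp {R : Type*} [CommSemiring R] (g f : PowerSeries R) : PowerSeries R :=
  PowerSeries.mk fun n =>
    ∑ k ∈ Finset.range (n + 1), PowerSeries.coeff k f * PowerSeries.coeff n (g ^ k)

/-- The Artin–Hasse exponential E(T) = exp(∑ T^{p^i}/p^i) over ℚ. -/
def artinHasse (p : ℕ) : PowerSeries ℚ := psComp (lseries p) (PowerSeries.exp ℚ)

set_option linter.unusedSectionVars false

variable (p : ℕ) [Fact p.Prime]

/-- The property that `Ep` is the Artin–Hasse exponential regarded as a power
series with coefficients in `ℤ_p` (its coefficients lie in `ℤ_(p) ⊆ ℤ_p`). -/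
def IsArtinHasseZp (Ep : PowerSeries ℤ_[p]) : Prop :=
  PowerSeries.map (PadicInt.Coe.ringHom) Ep
    = PowerSeries.map (Rat.castHom ℚ_[p]) (artinHasse p)

/-- The property that `πfam i` is the power series `π_i(T) ∈ T·ℤ_p[[T]]`
with `E(π_i(T)) = (1+T)^{p^i}`. -/
def IsPiFamily (Ep : PowerSeries ℤ_[p]) (πfam : ℕ → PowerSeries ℤ_[p]) : Prop :=
  ∀ i : ℕ, PowerSeries.constantCoeff (πfam i) = 0
    ∧ psComp (πfam i) Ep = (1 + X) ^ p ^ i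

lemma ah_coeff_one : PowerSeries.coeff 1 (artinHasse p) = 1 := by
  have hp : (1:ℕ) = p ^ 0 := (pow_zero p).symm
  rw [artinHasse, psComp, PowerSeries.coeff_mk]
  rw [Finset.sum_range_succ, Finset.sum_range_one]
  simp [lseries, PowerSeries.coeff_exp]
  · exact ⟨0, hp⟩

lemma ep_coeff_one (Ep : PowerSeries ℤ_[p]) (hEp : IsArtinHasseZp p Ep) :
    PowerSeries.coeff 1 Ep = 1 := by
  have h := congrArg (PowerSeries.coeff 1) hEp
  simp only [PowerSeries.coeff_map] at h
  rw [ah_coeff_one] at h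
  have h2 : ((PowerSeries.coeff 1 Ep : ℤ_[p]) : ℚ_[p]) = ((1 : ℤ_[p]) : ℚ_[p]) := by
    simp [PadicInt.Coe.ringHom] at h; exact h
  exact Subtype.coe_injective h2

lemma coeff_one_add_X_pow_ps (R : Type*) [CommRing R] (n k : ℕ) :
    PowerSeries.coeff k ((1 + X) ^ n) = (n.choose k : R) := by
  have : ((1 + X : PowerSeries R)) = ((1 + Polynomial.X : Polynomial R) : PowerSeries R) := by
    simp
  rw [this, ← Polynomial.coe_pow, Polynomial.coeff_coe, Polynomial.coeff_one_add_X_pow]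

lemma mul_tendsto_zero (f g : ℕ → ℤ_[p])
    (hf : Filter.Tendsto f Filter.atTop (nhds 0)) :
    Filter.Tendsto (fun i => f i * g i) Filter.atTop (nhds 0) := by
  rw [tendsto_zero_iff_norm_tendsto_zero] at hf ⊢
  refine squeeze_zero (fun i => norm_nonneg _) (fun i => ?_) hf
  rw [norm_mul]
  exact mul_le_of_le_one_right (norm_nonneg _) (PadicInt.norm_le_one _)

lemma binom_tendsto (j : ℕ) (hj : j ≠ 0) :
    Filter.Tendsto (fun i : ℕ => (((p ^ i).choose j : ℕ) : ℤ_[p]))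
      Filter.atTop (nhds 0) := by
  obtain ⟨m, rfl⟩ : ∃ m, j = m + 1 := ⟨j - 1, (Nat.succ_pred_eq_of_pos (Nat.pos_of_ne_zero hj)).symm⟩
  have hp1 : 1 < p := (Fact.out : p.Prime).one_lt
  have hjne : ((m + 1 : ℕ) : ℤ_[p]) ≠ 0 := Nat.cast_ne_zero.mpr (Nat.succ_ne_zero m)
  have hjpos : (0:ℝ) < ‖((m + 1 : ℕ) : ℤ_[p])‖ := norm_pos_iff.mpr hjne
  rw [tendsto_zero_iff_norm_tendsto_zero]
  have key : ∀ i : ℕ, ‖(((p ^ i).choose (m + 1) : ℕ) : ℤ_[p])‖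
      ≤ ‖((m + 1 : ℕ) : ℤ_[p])‖⁻¹ * ((p:ℝ)⁻¹) ^ i := by
    intro i
    have hpos : 0 < p ^ i := Nat.pow_pos (Nat.lt_of_lt_of_le Nat.zero_lt_one hp1.le)
    have hid : p ^ i * (p ^ i - 1).choose m = (p ^ i).choose (m + 1) * (m + 1) := by
      have h := Nat.add_one_mul_choose_eq (p ^ i - 1) m
      have hs : p ^ i - 1 + 1 = p ^ i := by omega
      rwa [hs] at h
    have hid' : ((p:ℤ_[p]) ^ i) * ((p ^ i - 1).choose m : ℤ_[p])
        = (((p ^ i).choose (m + 1) : ℕ) : ℤ_[p]) * ((m + 1 : ℕ) : ℤ_[p]) := by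
      exact_mod_cast congrArg (fun n : ℕ => (n : ℤ_[p])) hid
    have hnorm : ‖(((p ^ i).choose (m + 1) : ℕ) : ℤ_[p])‖ * ‖((m + 1 : ℕ) : ℤ_[p])‖
        ≤ ((p:ℝ)⁻¹) ^ i := by
      rw [← norm_mul, ← hid', norm_mul, PadicInt.norm_p_pow]
      have hz : (p:ℝ) ^ (-(i:ℤ)) = ((p:ℝ)⁻¹) ^ i := by
        rw [zpow_neg, ← inv_zpow, zpow_natCast]
      rw [hz]
      exact mul_le_of_le_one_right (by positivity) (PadicInt.norm_le_one _)
    rw [inv_mul_eq_div, le_div_iff₀ hjpos]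
    exact hnorm
  refine squeeze_zero (fun i => norm_nonneg _) key ?_
  have : Filter.Tendsto (fun i : ℕ => ((p:ℝ)⁻¹) ^ i) Filter.atTop (nhds 0) := by
    apply tendsto_pow_atTop_nhds_zero_of_lt_one (by positivity)
    rw [inv_lt_one_iff₀]
    right; exact_mod_cast hp1
  simpa using this.const_mul _

/-- writing `π_i(T) = ∑_j b_{ij} T^j` with `b_{ij} ∈ ℤ_p`, for every fixed
`j` the coefficients `b_{ij}` tend to `0` in the `p`-adic topology as `i → ∞`. -/
theorem statement7
    (Ep : PowerSeries ℤ_[p]) (hEp : IsArtinHasseZp p Ep)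
    (πfam : ℕ → PowerSeries ℤ_[p]) (hπ : IsPiFamily p Ep πfam) (j : ℕ) :
    Filter.Tendsto (fun i : ℕ => PowerSeries.coeff j (πfam i))
      Filter.atTop (nhds 0) := by
  induction j using Nat.strong_induction_on with
  | _ j IH =>
  rcases Nat.eq_zero_or_pos j with hj0 | hjpos
  · subst hj0
    have : (fun i : ℕ => PowerSeries.coeff 0 (πfam i)) = fun _ => 0 := by
      funext i
      rw [PowerSeries.coeff_zero_eq_constantCoeff, (hπ i).1]
    rw [this]
    exact tendsto_const_nhds
  · -- j ≥ 1
    have hjne : j ≠ 0 := Nat.pos_iff_ne_zero.mp hjpos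
    have h1mem : 1 ∈ Finset.range (j + 1) := Finset.mem_range.mpr (by omega)
    -- key identity
    have key : ∀ i : ℕ, PowerSeries.coeff j (πfam i)
        = (((p ^ i).choose j : ℕ) : ℤ_[p])
          - ∑ k ∈ (Finset.range (j + 1)).erase 1,
              PowerSeries.coeff k Ep * PowerSeries.coeff j ((πfam i) ^ k) := by
      intro i
      have h := congrArg (PowerSeries.coeff j) (hπ i).2
      rw [coeff_one_add_X_pow_ps] at h
      rw [psComp, PowerSeries.coeff_mk] at h
      rw [← Finset.add_sum_erase _ _ h1mem] at h
      rw [ep_coeff_one p Ep hEp, one_mul, pow_one] at h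
      exact eq_sub_of_add_eq h
    -- pow coefficients tend to zero
    have hpow : ∀ k : ℕ, 2 ≤ k →
        Filter.Tendsto (fun i : ℕ => PowerSeries.coeff j ((πfam i) ^ k))
          Filter.atTop (nhds 0) := by
      intro k hk
      obtain ⟨l, rfl⟩ : ∃ l, k = l + 1 := ⟨k - 1, by omega⟩
      have hl : 1 ≤ l := by omega
      have hco : ∀ i, PowerSeries.coeff j ((πfam i) ^ (l + 1))
          = ∑ ab ∈ Finset.HasAntidiagonal.antidiagonal j,
              PowerSeries.coeff ab.1 (πfam i) * PowerSeries.coeff ab.2 ((πfam i) ^ l) := by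
        intro i
        rw [pow_succ', PowerSeries.coeff_mul]
      simp only [hco]
      rw [show (0 : ℤ_[p]) = ∑ _ab ∈ Finset.HasAntidiagonal.antidiagonal j, (0 : ℤ_[p]) by simp]
      refine tendsto_finset_sum _ (fun ab hab => ?_)
      have habj : ab.1 + ab.2 = j := Finset.HasAntidiagonal.mem_antidiagonal.mp hab
      rcases Nat.eq_zero_or_pos ab.1 with h1 | h1
      · have : (fun i : ℕ => PowerSeries.coeff ab.1 (πfam i)
            * PowerSeries.coeff ab.2 ((πfam i) ^ l)) = fun _ => 0 := by
          funext i
          rw [h1, PowerSeries.coeff_zero_eq_constantCoeff, (hπ i).1, zero_mul]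
        rw [this]; exact tendsto_const_nhds
      rcases Nat.eq_zero_or_pos ab.2 with h2 | h2
      · have : (fun i : ℕ => PowerSeries.coeff ab.1 (πfam i)
            * PowerSeries.coeff ab.2 ((πfam i) ^ l)) = fun _ => 0 := by
          funext i
          rw [h2, PowerSeries.coeff_zero_eq_constantCoeff, map_pow, (hπ i).1,
            zero_pow (by omega : l ≠ 0), mul_zero]
        rw [this]; exact tendsto_const_nhds
      · exact mul_tendsto_zero p _ _ (IH ab.1 (by omega))
    -- assemble
    have hsum : Filter.Tendsto
        (fun i : ℕ => ∑ k ∈ (Finset.range (j + 1)).erase 1,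
            PowerSeries.coeff k Ep * PowerSeries.coeff j ((πfam i) ^ k))
        Filter.atTop (nhds 0) := by
      rw [show (0 : ℤ_[p]) = ∑ _k ∈ (Finset.range (j + 1)).erase 1, (0 : ℤ_[p]) by simp]
      refine tendsto_finset_sum _ (fun k hk => ?_)
      have hk1 : k ≠ 1 := Finset.ne_of_mem_erase hk
      rcases Nat.eq_zero_or_pos k with hk0 | hkpos
      · have : (fun i : ℕ => PowerSeries.coeff k Ep
            * PowerSeries.coeff j ((πfam i) ^ k)) = fun _ => 0 := by
          funext i
          rw [hk0, pow_zero, PowerSeries.coeff_one, if_neg hjne, mul_zero]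
        rw [this]; exact tendsto_const_nhds
      · have hk2 : 2 ≤ k := by omega
        have := (hpow k hk2).const_mul (PowerSeries.coeff k Ep)
        simpa using this
    simp only [key]
    simpa using (binom_tendsto p j hjne).sub hsum


end
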